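/- Let $\delta x_{t+1} = \bar{A}_t \delta x_t + \bar{S}_t(\delta x_t) + \epsilon w_t$ with $\delta x_0 = 0$, where each $\bar{S}_t$ is a function satisfying $|\bar{S}_t(z)| \le C|z|^2$ for all $|z| \le 1$, and let $\delta x^l_{t+1} = \bar{A}_t \delta x^l_t + \epsilon w_t$ with $\delta x^l_0 = 0$. Then the error $e_t = \delta x_t - \delta x^l_t$ satisfies $|e_t| \le C_t \epsilon^2$ for some constant $C_t$ depending only on $t$, the bounds $|\bar{A}_s|$, $C$, and the noise bound $\max_s |w_s|$, provided $\epsilon$ is small enough that $|\delta x_s| \le 1$ for all $s \le t$. -/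

import Mathlib

/-- Lemma 1 (scalar case): the deviation of the nonlinear closed-loop perturbation
state from its linearization is `O(ε²)`. -/
theorem stmt0 (A : ℕ → ℝ) (S : ℕ → ℝ → ℝ) (w : ℕ → ℝ) (C W : ℝ)
    (hS : ∀ (t : ℕ) (z : ℝ), |z| ≤ 1 → |S t z| ≤ C * z ^ 2)
    (hw : ∀ s, |w s| ≤ W)
    (x xl : ℝ → ℕ → ℝ)
    (hx0 : ∀ ε, x ε 0 = 0) (hxl0 : ∀ ε, xl ε 0 = 0)
    (hx : ∀ ε t, x ε (t + 1) = A t * x ε t + S t (x ε t) + ε * w t)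
    (hxl : ∀ ε t, xl ε (t + 1) = A t * xl ε t + ε * w t)
    (t : ℕ) :
    ∃ Ct : ℝ, ∀ ε : ℝ, 0 < ε → (∀ s ≤ t, |x ε s| ≤ 1) →
      |x ε t - xl ε t| ≤ Ct * ε ^ 2 := by
  have hC : 0 ≤ C := le_trans (abs_nonneg _) (by simpa using hS 0 1 (by norm_num))
  have hW : 0 ≤ W := le_trans (abs_nonneg _) (hw 0)
  set M : ℕ → ℝ := fun s => Nat.rec 0 (fun s Ms => (|A s| + C) * Ms + W) s with hMdef
  have hM0 : M 0 = 0 := rfl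
  have hMs : ∀ s, M (s + 1) = (|A s| + C) * M s + W := fun s => rfl
  have hMnn : ∀ s, 0 ≤ M s := by
    intro s; induction s with
    | zero => simp [hM0]
    | succ s ih =>
      rw [hMs]
      exact add_nonneg (mul_nonneg (add_nonneg (abs_nonneg _) hC) ih) hW
  set E : ℕ → ℝ := fun s => Nat.rec 0 (fun s Es => |A s| * Es + C * (M s) ^ 2) s with hEdef
  have hE0 : E 0 = 0 := rfl
  have hEs : ∀ s, E (s + 1) = |A s| * E s + C * (M s) ^ 2 := fun s => rfl
  refine ⟨E t, fun ε hε hb => ?_⟩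
  -- first: |x ε s| ≤ M s * ε for s ≤ t
  have key : ∀ s, s ≤ t → |x ε s| ≤ M s * ε := by
    intro s; induction s with
    | zero => intro _; simp [hx0, hM0]
    | succ s ih =>
      intro hst
      have hs : s ≤ t := le_of_lt (lt_of_lt_of_le (Nat.lt_succ_self s) hst)
      have ihs := ih hs
      have h1 : |x ε s| ≤ 1 := hb s hs
      have hSx : |S s (x ε s)| ≤ C * (M s * ε) := by
        calc |S s (x ε s)| ≤ C * (x ε s) ^ 2 := hS s _ h1
          _ = C * (|x ε s| * |x ε s|) := by rw [← sq_abs (x ε s)]; ring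
          _ ≤ C * (M s * ε * 1) := by
              apply mul_le_mul_of_nonneg_left _ hC
              exact mul_le_mul ihs h1 (abs_nonneg _)
                (mul_nonneg (hMnn s) hε.le)
          _ = C * (M s * ε) := by ring
      calc |x ε (s + 1)| = |A s * x ε s + S s (x ε s) + ε * w s| := by rw [hx]
        _ ≤ |A s * x ε s| + |S s (x ε s)| + |ε * w s| := by
            exact (abs_add_le _ _).trans (add_le_add_left (abs_add_le _ _) _)
        _ ≤ |A s| * (M s * ε) + C * (M s * ε) + ε * W := by
            rw [abs_mul, abs_mul, abs_of_pos hε]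
            exact add_le_add (add_le_add (mul_le_mul_of_nonneg_left ihs (abs_nonneg _)) hSx)
              (mul_le_mul_of_nonneg_left (hw s) hε.le)
        _ = ((|A s| + C) * M s + W) * ε := by ring
        _ = M (s + 1) * ε := by rw [hMs]
  -- second: error bound
  have key2 : ∀ s, s ≤ t → |x ε s - xl ε s| ≤ E s * ε ^ 2 := by
    intro s; induction s with
    | zero => intro _; simp [hx0, hxl0, hE0]
    | succ s ih =>
      intro hst
      have hs : s ≤ t := le_of_lt (lt_of_lt_of_le (Nat.lt_succ_self s) hst)
      have ihs := ih hs
      have h1 : |x ε s| ≤ 1 := hb s hs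
      have hSx : |S s (x ε s)| ≤ C * (M s) ^ 2 * ε ^ 2 := by
        calc |S s (x ε s)| ≤ C * (x ε s) ^ 2 := hS s _ h1
          _ ≤ C * (M s * ε) ^ 2 := by
              apply mul_le_mul_of_nonneg_left _ hC
              rw [← sq_abs (x ε s)]
              exact pow_le_pow_left₀ (abs_nonneg _) (key s hs) 2
          _ = C * (M s) ^ 2 * ε ^ 2 := by ring
      calc |x ε (s + 1) - xl ε (s + 1)|
          = |A s * (x ε s - xl ε s) + S s (x ε s)| := by rw [hx, hxl]; ring_nf
        _ ≤ |A s| * |x ε s - xl ε s| + |S s (x ε s)| := by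
            refine (abs_add_le _ _).trans ?_
            rw [abs_mul]
        _ ≤ |A s| * (E s * ε ^ 2) + C * (M s) ^ 2 * ε ^ 2 := by
            exact add_le_add (mul_le_mul_of_nonneg_left ihs (abs_nonneg _)) hSx
        _ = (|A s| * E s + C * (M s) ^ 2) * ε ^ 2 := by ring
        _ = E (s + 1) * ε ^ 2 := by rw [hEs]
  exact key2 t le_rfl
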